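/- For z ≥ 0, (2Φ(z) - 1)² ≤ 1 - e^{-2z²/π}, where Φ is the standard normal CDF. -/

import Mathlib

open Real Set Filter Topology MeasureTheory

noncomputable def phi (y : ℝ) : ℝ := (Real.sqrt (2 * Real.pi))⁻¹ * Real.exp (-y ^ 2 / 2)

noncomputable def Phi (x : ℝ) : ℝ := ∫ y in Set.Iic x, phi y

noncomputable def PhiInv (a : ℝ) : ℝ := Function.invFun Phi a

lemma phi_integrable : Integrable phi := by
  have : Integrable (fun y : ℝ => Real.exp (-(1/2 : ℝ) * y ^ 2)) :=
    integrable_exp_neg_mul_sq (by norm_num)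
  have h := this.const_mul (Real.sqrt (2 * Real.pi))⁻¹
  refine h.congr (Filter.Eventually.of_forall fun y => ?_)
  unfold phi; ring_nf

lemma phi_integral_total : ∫ y : ℝ, phi y = 1 := by
  have h := integral_gaussian (1/2 : ℝ)
  have h2 : ∫ y : ℝ, Real.exp (-y ^ 2 / 2) = Real.sqrt (2 * Real.pi) := by
    rw [show (fun y : ℝ => Real.exp (-y ^ 2 / 2)) = fun y : ℝ => Real.exp (-(1/2 : ℝ) * y ^ 2) by
      funext y; ring_nf, h]
    rw [show Real.pi / (1/2 : ℝ) = 2 * Real.pi by ring]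
  calc ∫ y : ℝ, phi y = (Real.sqrt (2 * Real.pi))⁻¹ * ∫ y : ℝ, Real.exp (-y ^ 2 / 2) := by
        rw [← integral_const_mul]; rfl
    _ = 1 := by
        rw [h2]; rw [inv_mul_cancel₀]
        positivity

lemma two_Phi_sub_one (z : ℝ) (hz : 0 ≤ z) :
    2 * Phi z - 1 = ∫ y in Set.Icc (-z) z, phi y := by
  have heven : Phi (-z) = ∫ y in Set.Ioi z, phi y := by
    rw [Phi]
    have := integral_comp_neg_Iic (-z) phi
    rw [neg_neg] at this
    rw [← this]
    congr 1
    funext y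
    unfold phi
    ring_nf
  have hsplit : Phi z + (∫ y in Set.Ioi z, phi y) = 1 := by
    rw [Phi, ← phi_integral_total]
    exact intervalIntegral.integral_Iic_add_Ioi phi_integrable.integrableOn phi_integrable.integrableOn
  have hdiff : Phi z - Phi (-z) = ∫ y in Set.Ioc (-z) z, phi y := by
    rw [Phi, Phi,
      intervalIntegral.integral_Iic_sub_Iic phi_integrable.integrableOn phi_integrable.integrableOn,
      intervalIntegral.integral_of_le (by linarith)]
  have hIoc : (∫ y in Set.Ioc (-z) z, phi y) = ∫ y in Set.Icc (-z) z, phi y :=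
    setIntegral_congr_set Ioc_ae_eq_Icc
  have : Phi (-z) = 1 - Phi z := by rw [heven]; linarith
  rw [← hIoc, ← hdiff, this]; ring

/-- Integral of a radial function over the disc of radius `r`, via polar coordinates. -/
lemma integral_disc (r : ℝ) (hr : 0 ≤ r) (f : ℝ → ℝ) :
    ∫ p : ℝ × ℝ in {p : ℝ × ℝ | p.1 ^ 2 + p.2 ^ 2 ≤ r ^ 2},
      f (p.1 ^ 2 + p.2 ^ 2) = (2 * Real.pi) * ∫ ρ in (0:ℝ)..r, ρ * f (ρ ^ 2) := by
  have hD : MeasurableSet {p : ℝ × ℝ | p.1 ^ 2 + p.2 ^ 2 ≤ r ^ 2} := by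
    apply measurableSet_le <;> fun_prop
  set F : ℝ × ℝ → ℝ :=
    Set.indicator {p : ℝ × ℝ | p.1 ^ 2 + p.2 ^ 2 ≤ r ^ 2} (fun p => f (p.1 ^ 2 + p.2 ^ 2)) with hF
  have key := integral_comp_polarCoord_symm F
  have hRHS : ∫ p : ℝ × ℝ, F p
      = ∫ p : ℝ × ℝ in {p : ℝ × ℝ | p.1 ^ 2 + p.2 ^ 2 ≤ r ^ 2},
          f (p.1 ^ 2 + p.2 ^ 2) := integral_indicator hD
  have hLHS : (∫ p in polarCoord.target, p.1 • F (polarCoord.symm p))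
      = ∫ p in polarCoord.target,
          Set.indicator (Set.Iic r) (fun ρ => ρ * f (ρ ^ 2)) p.1 * (1:ℝ) := by
    apply setIntegral_congr_fun polarCoord.open_target.measurableSet
    intro p hp
    rw [polarCoord_target] at hp
    have hp1 : 0 < p.1 := hp.1
    dsimp only
    have habs : (p.1 * Real.cos p.2) ^ 2 + (p.1 * Real.sin p.2) ^ 2 = p.1 ^ 2 := by
      nlinarith [Real.sin_sq_add_cos_sq p.2]
    have hsymm : polarCoord.symm p = (p.1 * Real.cos p.2, p.1 * Real.sin p.2) := by
      simp [polarCoord_symm_apply]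
    rw [hsymm, hF]
    by_cases hle : p.1 ≤ r
    · have hmem : ((p.1 * Real.cos p.2, p.1 * Real.sin p.2) : ℝ × ℝ)
          ∈ {p : ℝ × ℝ | p.1 ^ 2 + p.2 ^ 2 ≤ r ^ 2} := by
        simp only [Set.mem_setOf_eq]
        rw [habs]
        exact pow_le_pow_left₀ hp1.le hle 2
      rw [Set.indicator_of_mem hmem, Set.indicator_of_mem (Set.mem_Iic.2 hle)]
      simp only [smul_eq_mul, habs, mul_one]
    · push_neg at hle
      have hmem : ((p.1 * Real.cos p.2, p.1 * Real.sin p.2) : ℝ × ℝ)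
          ∉ {p : ℝ × ℝ | p.1 ^ 2 + p.2 ^ 2 ≤ r ^ 2} := by
        simp only [Set.mem_setOf_eq]
        rw [habs]
        nlinarith
      rw [Set.indicator_of_notMem hmem, Set.indicator_of_notMem (by simpa using hle)]
      simp
  rw [hRHS, hLHS] at key
  rw [← key]
  rw [polarCoord_target, MeasureTheory.Measure.volume_eq_prod,
    MeasureTheory.setIntegral_prod_mul (μ := volume) (ν := volume)
      ((Set.Iic r).indicator (fun ρ => ρ * f (ρ ^ 2))) (fun _ => (1:ℝ))
      (Set.Ioi 0) (Set.Ioo (-Real.pi) Real.pi)]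
  have h1 : ∫ y in Set.Ioo (-Real.pi) Real.pi, (1:ℝ) = 2 * Real.pi := by
    rw [setIntegral_const, measureReal_def, Real.volume_Ioo, smul_eq_mul, mul_one,
      ENNReal.toReal_ofReal (by linarith [Real.pi_pos])]
    ring
  have h2 : (∫ x in Set.Ioi (0:ℝ), Set.indicator (Set.Iic r) (fun ρ => ρ * f (ρ ^ 2)) x)
      = ∫ ρ in (0:ℝ)..r, ρ * f (ρ ^ 2) := by
    rw [setIntegral_indicator measurableSet_Iic, Set.Ioi_inter_Iic,
      intervalIntegral.integral_of_le hr]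
  rw [h1, h2]
  ring

theorem gaussian_square_disc (z : ℝ) (hz : 0 ≤ z) :
    (2 * Phi z - 1) ^ 2 ≤ 1 - Real.exp (-2 * z ^ 2 / Real.pi) := by
  have hπ : 0 < Real.pi := Real.pi_pos
  set r : ℝ := 2 * z / Real.sqrt Real.pi with hr_def
  have hr : 0 ≤ r := by positivity
  have hr2 : r ^ 2 = 4 * z ^ 2 / Real.pi := by
    rw [hr_def, div_pow, Real.sq_sqrt hπ.le]; ring
  set g : ℝ × ℝ → ℝ := fun p => (2 * Real.pi)⁻¹ * Real.exp (-(p.1 ^ 2 + p.2 ^ 2) / 2) with hg_def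
  have hg_phi : ∀ p : ℝ × ℝ, phi p.1 * phi p.2 = g p := by
    intro p
    rw [hg_def]
    simp only [phi]
    rw [show ((Real.sqrt (2 * Real.pi))⁻¹ * Real.exp (-p.1 ^ 2 / 2)) *
        ((Real.sqrt (2 * Real.pi))⁻¹ * Real.exp (-p.2 ^ 2 / 2))
        = (Real.sqrt (2 * Real.pi) * Real.sqrt (2 * Real.pi))⁻¹ *
          (Real.exp (-p.1 ^ 2 / 2) * Real.exp (-p.2 ^ 2 / 2)) by ring]
    rw [Real.mul_self_sqrt (by positivity), ← Real.exp_add]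
    congr 1
    ring
  set S : Set (ℝ × ℝ) := Set.Icc (-z) z ×ˢ Set.Icc (-z) z with hS_def
  set D : Set (ℝ × ℝ) := {p : ℝ × ℝ | p.1 ^ 2 + p.2 ^ 2 ≤ r ^ 2} with hD_def
  have hS : MeasurableSet S := measurableSet_Icc.prod measurableSet_Icc
  have hD : MeasurableSet D := by apply measurableSet_le <;> fun_prop
  -- the square integral
  have hsq : (2 * Phi z - 1) ^ 2 = ∫ p in S, g p := by
    rw [two_Phi_sub_one z hz, sq, hS_def, MeasureTheory.Measure.volume_eq_prod,
      ← MeasureTheory.setIntegral_prod_mul (μ := volume) (ν := volume) phi phi]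
    exact setIntegral_congr_fun (measurableSet_Icc.prod measurableSet_Icc)
      fun p _ => hg_phi p
  -- the disc integral
  have hdisc : (∫ p in D, g p) = 1 - Real.exp (-r ^ 2 / 2) := by
    have h := integral_disc r hr (fun t => (2 * Real.pi)⁻¹ * Real.exp (-t / 2))
    rw [hD_def]
    rw [show (fun p : ℝ × ℝ => g p)
        = fun p : ℝ × ℝ => (fun t => (2 * Real.pi)⁻¹ * Real.exp (-t / 2)) (p.1 ^ 2 + p.2 ^ 2) by
      funext p; rfl, h]
    have heq : (fun ρ : ℝ => ρ * ((2 * Real.pi)⁻¹ * Real.exp (-ρ ^ 2 / 2)))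
        = fun ρ : ℝ => (2 * Real.pi)⁻¹ * (ρ * Real.exp (-ρ ^ 2 / 2)) := by
      funext ρ; ring
    rw [heq, intervalIntegral.integral_const_mul]
    have hftc : (∫ ρ in (0:ℝ)..r, ρ * Real.exp (-ρ ^ 2 / 2))
        = 1 - Real.exp (-r ^ 2 / 2) := by
      have hderiv : ∀ x ∈ Set.uIcc (0:ℝ) r,
          HasDerivAt (fun ρ : ℝ => -Real.exp (-ρ ^ 2 / 2)) (x * Real.exp (-x ^ 2 / 2)) x := by
        intro x _
        have h1 : HasDerivAt (fun ρ : ℝ => -ρ ^ 2 / 2) (-x) x := by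
          have := ((hasDerivAt_pow 2 x).neg).div_const 2
          simpa using this.congr_deriv (by ring)
        have h2 := (h1.exp).neg
        exact h2.congr_deriv (by ring)
      have hint : IntervalIntegrable (fun x : ℝ => x * Real.exp (-x ^ 2 / 2)) volume 0 r := by
        apply Continuous.intervalIntegrable
        fun_prop
      rw [intervalIntegral.integral_eq_sub_of_hasDerivAt hderiv hint]
      simp [Real.exp_zero]
      ring
    rw [hftc]
    field_simp
  -- integrability
  have hg_int : Integrable g := by
    have := phi_integrable.mul_prod phi_integrable
    rw [← MeasureTheory.Measure.volume_eq_prod] at this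
    exact this.congr (Filter.Eventually.of_forall hg_phi)
  -- volumes
  have hDsub : D ⊆ Set.Icc (-r) r ×ˢ Set.Icc (-r) r := by
    intro p hp
    rw [hD_def, Set.mem_setOf_eq] at hp
    constructor
    · exact abs_le_of_sq_le_sq' (by nlinarith) hr
    · exact abs_le_of_sq_le_sq' (by nlinarith) hr
  have hSvol : (volume S).toReal = 4 * z ^ 2 := by
    rw [hS_def, MeasureTheory.Measure.volume_eq_prod, Measure.prod_prod, Real.volume_Icc,
      ← ENNReal.ofReal_mul (by linarith), ENNReal.toReal_ofReal (by nlinarith)]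
    ring
  have hSfin : volume S ≠ ⊤ := by
    rw [hS_def, MeasureTheory.Measure.volume_eq_prod, Measure.prod_prod, Real.volume_Icc]
    exact ENNReal.mul_ne_top ENNReal.ofReal_ne_top ENNReal.ofReal_ne_top
  have hDfin : volume D ≠ ⊤ := by
    refine ne_top_of_le_ne_top ?_ (measure_mono hDsub)
    rw [MeasureTheory.Measure.volume_eq_prod, Measure.prod_prod, Real.volume_Icc]
    exact ENNReal.mul_ne_top ENNReal.ofReal_ne_top ENNReal.ofReal_ne_top
  have hDvol : (volume D).toReal = 4 * z ^ 2 := by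
    have h := integral_disc r hr (fun _ => (1:ℝ))
    rw [← hD_def] at h
    rw [setIntegral_const (μ := volume) (s := D) (1:ℝ)] at h
    simp only [smul_eq_mul, mul_one] at h
    rw [← measureReal_def, h, integral_id, hr2]
    field_simp
    ring
  -- volumes of the symmetric differences agree
  have h1 := measure_inter_add_diff (μ := volume) S hD
  have h2 := measure_inter_add_diff (μ := volume) D hS
  have hfin_SD : volume (S \ D) ≠ ⊤ := ne_top_of_le_ne_top hSfin (measure_mono Set.diff_subset)
  have hfin_DS : volume (D \ S) ≠ ⊤ := ne_top_of_le_ne_top hDfin (measure_mono Set.diff_subset)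
  have hfin_SiD : volume (S ∩ D) ≠ ⊤ :=
    ne_top_of_le_ne_top hSfin (measure_mono Set.inter_subset_left)
  have harea : (volume (S \ D)).toReal = (volume (D \ S)).toReal := by
    have e1 : (volume (S ∩ D)).toReal + (volume (S \ D)).toReal = 4 * z ^ 2 := by
      rw [← ENNReal.toReal_add hfin_SiD hfin_SD, h1, hSvol]
    have e2 : (volume (S ∩ D)).toReal + (volume (D \ S)).toReal = 4 * z ^ 2 := by
      rw [Set.inter_comm, ← ENNReal.toReal_add
        (ne_top_of_le_ne_top hDfin (measure_mono Set.inter_subset_left)) hfin_DS, h2, hDvol]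
    have hinter : (volume (S ∩ D)).toReal = (volume (D ∩ S)).toReal := by
      rw [Set.inter_comm]
    linarith
  -- comparison
  set c : ℝ := (2 * Real.pi)⁻¹ * Real.exp (-r ^ 2 / 2) with hc_def
  have hbound1 : ∫ p in S \ D, g p ≤ c * (volume (S \ D)).toReal := by
    have : ∫ p in S \ D, g p ≤ ∫ _ in S \ D, c := by
      apply setIntegral_mono_on hg_int.integrableOn
        (integrableOn_const hfin_SD) (hS.diff hD)
      intro p hp
      have hp2 : ¬(p.1 ^ 2 + p.2 ^ 2 ≤ r ^ 2) := hp.2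
      push_neg at hp2
      rw [hg_def, hc_def]
      have : Real.exp (-(p.1 ^ 2 + p.2 ^ 2) / 2) ≤ Real.exp (-r ^ 2 / 2) :=
        Real.exp_le_exp.2 (by linarith)
      exact mul_le_mul_of_nonneg_left this (by positivity)
    rw [setIntegral_const, smul_eq_mul, mul_comm] at this
    exact this
  have hbound2 : c * (volume (D \ S)).toReal ≤ ∫ p in D \ S, g p := by
    have : (∫ _ in D \ S, c) ≤ ∫ p in D \ S, g p := by
      apply setIntegral_mono_on (integrableOn_const hfin_DS)
        hg_int.integrableOn (hD.diff hS)
      intro p hp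
      have hp1 : p.1 ^ 2 + p.2 ^ 2 ≤ r ^ 2 := hp.1
      rw [hg_def, hc_def]
      have : Real.exp (-r ^ 2 / 2) ≤ Real.exp (-(p.1 ^ 2 + p.2 ^ 2) / 2) :=
        Real.exp_le_exp.2 (by linarith)
      exact mul_le_mul_of_nonneg_left this (by positivity)
    rw [setIntegral_const, smul_eq_mul, mul_comm] at this
    exact this
  have hsplitS : (∫ p in S ∩ D, g p) + ∫ p in S \ D, g p = ∫ p in S, g p :=
    integral_inter_add_diff hD hg_int.integrableOn
  have hsplitD : (∫ p in D ∩ S, g p) + ∫ p in D \ S, g p = ∫ p in D, g p :=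
    integral_inter_add_diff hS hg_int.integrableOn
  have hcomm : (∫ p in S ∩ D, g p) = ∫ p in D ∩ S, g p := by rw [Set.inter_comm]
  have hmain : (∫ p in S, g p) ≤ ∫ p in D, g p := by
    rw [← hsplitS, ← hsplitD, hcomm]
    have : c * (volume (S \ D)).toReal = c * (volume (D \ S)).toReal := by rw [harea]
    linarith
  -- conclude
  rw [hsq]
  calc (∫ p in S, g p) ≤ ∫ p in D, g p := hmain
    _ = 1 - Real.exp (-r ^ 2 / 2) := hdisc
    _ = 1 - Real.exp (-2 * z ^ 2 / Real.pi) := by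
        congr 1
        rw [hr2]
        field_simp
        ring
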